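/- The invertible elements of the Bohl algebra B are exactly the functions t ↦ c·exp(λ·t) with c ∈ ℂ \ {0} and λ ∈ ℂ. That is, f ∈ B is a unit of B (there exists g ∈ B with f·g = 1 pointwise on ℝ) if and only if f(t) = c·exp(λ·t) for some nonzero complex number c and some λ ∈ ℂ. -/

import Mathlib

open Complex

noncomputable section

/-- The Bohl algebra: the subalgebra of functions `ℝ → ℂ` (pointwise operations)
spanned over `ℂ` by the functions `t ↦ t^k * exp (λ * t)`, `k ∈ ℕ`, `λ ∈ ℂ`. -/
def Bohl : Subalgebra ℂ (ℝ → ℂ) :=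
  Algebra.adjoin ℂ
    {g : ℝ → ℂ | ∃ (k : ℕ) (l : ℂ), g = fun t : ℝ => (t : ℂ) ^ k * Complex.exp (l * t)}

namespace BohlAux

open Polynomial

/-- Evaluation of a grouped exponential-polynomial representation. -/
noncomputable def E (s : Finset ℂ) (p : ℂ → Polynomial ℂ) : ℝ → ℂ :=
  fun t => ∑ l ∈ s, (p l).eval (t:ℂ) * Complex.exp (l * t)

lemma hasDerivAt_term (P : Polynomial ℂ) (l : ℂ) (t : ℝ) :
    HasDerivAt (fun t : ℝ => P.eval (t:ℂ) * Complex.exp (l * t))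
      ((P.derivative.eval (t:ℂ) + l * P.eval (t:ℂ)) * Complex.exp (l * t)) t := by
  have h1 : HasDerivAt (fun t : ℝ => P.eval (t:ℂ)) (P.derivative.eval (t:ℂ)) t :=
    (P.hasDerivAt (t:ℂ)).comp_ofReal
  have h2 : HasDerivAt (fun t : ℝ => Complex.exp (l * t)) (l * Complex.exp (l * t)) t := by
    have h3 := (((hasDerivAt_id ((t:ℝ):ℂ)).const_mul l).cexp).comp_ofReal
    simp only [id] at h3
    convert h3 using 1
    ring
  have := h1.fun_mul h2
  exact this.congr_deriv (by ring)

lemma hasDerivAt_E (s : Finset ℂ) (p : ℂ → Polynomial ℂ) (t : ℝ) :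
    HasDerivAt (E s p) (E s (fun l => derivative (p l) + C l * p l) t) t := by
  have h := HasDerivAt.fun_sum (u := s)
    (A := fun l => fun t : ℝ => (p l).eval (t:ℂ) * Complex.exp (l * t))
    (A' := fun l => ((p l).derivative.eval (t:ℂ) + l * (p l).eval (t:ℂ)) * Complex.exp (l * t))
    (fun l _ => hasDerivAt_term (p l) l t)
  have he : E s (fun l => derivative (p l) + C l * p l) t
      = ∑ l ∈ s, ((p l).derivative.eval (t:ℂ) + l * (p l).eval (t:ℂ)) * Complex.exp (l * t) := by
    simp [E]
  rw [he]
  exact h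

lemma E_deriv_zero (s : Finset ℂ) (p : ℂ → Polynomial ℂ) (h : ∀ t : ℝ, E s p t = 0) (l₀ : ℂ) :
    ∀ t : ℝ, E s (fun l => derivative (p l) + C (l - l₀) * p l) t = 0 := by
  intro t
  have h1 : E s (fun l => derivative (p l) + C l * p l) t = 0 := by
    have hd := hasDerivAt_E s p t
    have hz : E s p = fun _ => (0:ℂ) := funext h
    rw [hz] at hd
    exact hd.unique (hasDerivAt_const _ _)
  have h2 : E s (fun l => derivative (p l) + C (l - l₀) * p l) t
      = E s (fun l => derivative (p l) + C l * p l) t - l₀ * E s p t := by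
    simp only [E, Finset.mul_sum, ← Finset.sum_sub_distrib]
    refine Finset.sum_congr rfl fun l hl => ?_
    simp only [eval_add, eval_mul, eval_C, eval_sub]
    ring
  rw [h2, h1, h t]
  ring

lemma op_ne_zero {c : ℂ} (hc : c ≠ 0) {q : Polynomial ℂ} (hq : q ≠ 0) :
    derivative q + C c * q ≠ 0 := by
  intro h
  have h2 : (derivative q + C c * q).coeff q.natDegree = c * q.leadingCoeff := by
    rw [coeff_add, coeff_C_mul, coeff_derivative, Polynomial.coeff_natDegree_succ_eq_zero]
    rw [zero_mul, zero_add, leadingCoeff]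
  rw [h] at h2
  simp only [coeff_zero] at h2
  exact (mul_ne_zero hc (leadingCoeff_ne_zero.mpr hq)) h2.symm

lemma iterate_op_ne_zero {c : ℂ} (hc : c ≠ 0) {q : Polynomial ℂ} (hq : q ≠ 0) (k : ℕ) :
    (fun q => derivative q + C c * q)^[k] q ≠ 0 := by
  induction k with
  | zero => simpa using hq
  | succ k ihk =>
    rw [Function.iterate_succ_apply']
    exact op_ne_zero hc ihk

/-- Linear independence of the functions `t^j e^{λ t}`: a grouped representation that
vanishes identically has all polynomial coefficients zero. -/
lemma indep (s : Finset ℂ) : ∀ p : ℂ → Polynomial ℂ,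
    (∀ t : ℝ, E s p t = 0) → ∀ l ∈ s, p l = 0 := by
  induction s using Finset.strongInduction with
  | _ s ih =>
    intro p h l₀ hl₀
    set T : (ℂ → Polynomial ℂ) → (ℂ → Polynomial ℂ) :=
      fun p m => derivative (p m) + C (m - l₀) * p m with hT
    have hiter : ∀ k, ∀ t : ℝ, E s (T^[k] p) t = 0 := by
      intro k
      induction k with
      | zero => simpa using h
      | succ k ihk =>
        intro t
        rw [Function.iterate_succ_apply']
        exact E_deriv_zero s _ ihk l₀ t
    have hptwise : ∀ k (m : ℂ), (T^[k] p) m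
        = (fun q => derivative q + C (m - l₀) * q)^[k] (p m) := by
      intro k
      induction k with
      | zero => intro m; simp
      | succ k ihk =>
        intro m
        rw [Function.iterate_succ_apply', Function.iterate_succ_apply']
        simp only [hT] at ihk ⊢
        simp only [ihk]
    set k := (p l₀).natDegree + 1 with hk
    have hk0 : (T^[k] p) l₀ = 0 := by
      rw [hptwise]
      have he : (fun q : Polynomial ℂ => derivative q + C (l₀ - l₀) * q)
          = fun q => derivative q := by
        funext q; simp
      rw [he]
      exact Polynomial.iterate_derivative_eq_zero (by omega)
    have herase : ∀ t : ℝ, E (s.erase l₀) (T^[k] p) t = 0 := by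
      intro t
      have h5 := hiter k t
      rw [E, ← Finset.add_sum_erase _ _ hl₀, hk0, eval_zero, zero_mul, zero_add] at h5
      exact h5
    have hz := ih (s.erase l₀) (Finset.erase_ssubset hl₀) _ herase
    have hothers : ∀ m ∈ s, m ≠ l₀ → p m = 0 := by
      intro m hm hne
      have h0 := hz m (Finset.mem_erase.mpr ⟨hne, hm⟩)
      rw [hptwise] at h0
      by_contra hpm
      exact iterate_op_ne_zero (sub_ne_zero.mpr hne) hpm k h0
    have hev : ∀ t : ℝ, (p l₀).eval (t:ℂ) = 0 := by
      intro t
      have h6 := h t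
      rw [E, ← Finset.add_sum_erase _ _ hl₀] at h6
      have hrest : ∑ m ∈ s.erase l₀, (p m).eval (t:ℂ) * Complex.exp (m * t) = 0 :=
        Finset.sum_eq_zero fun m hm => by
          rw [hothers m (Finset.mem_of_mem_erase hm) (Finset.ne_of_mem_erase hm)]; simp
      rw [hrest, add_zero] at h6
      exact (mul_eq_zero.mp h6).resolve_right (Complex.exp_ne_zero _)
    apply Polynomial.eq_zero_of_infinite_isRoot
    apply Set.Infinite.mono (s := Set.range (Complex.ofReal))
    · rintro x ⟨t, rfl⟩; exact hev t
    · exact Set.infinite_range_of_injective Complex.ofReal_injective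

def HasRep (f : ℝ → ℂ) : Prop :=
  ∃ (s : Finset ℂ) (p : ℂ → Polynomial ℂ), ∀ t : ℝ, f t = E s p t

lemma E_union (s₁ s₂ : Finset ℂ) (p₁ p₂ : ℂ → Polynomial ℂ) (t : ℝ) :
    E (s₁ ∪ s₂) (fun l => (if l ∈ s₁ then p₁ l else 0) + (if l ∈ s₂ then p₂ l else 0)) t
      = E s₁ p₁ t + E s₂ p₂ t := by
  simp only [E, eval_add, add_mul, Finset.sum_add_distrib]
  congr 1
  · have : ∀ l : ℂ, ((if l ∈ s₁ then p₁ l else 0).eval (t:ℂ)) * Complex.exp (l * t)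
        = if l ∈ s₁ then (p₁ l).eval (t:ℂ) * Complex.exp (l * t) else 0 := by
      intro l; split_ifs <;> simp
    rw [Finset.sum_congr rfl fun l _ => this l, Finset.sum_ite_mem,
      Finset.union_inter_cancel_left]
  · have : ∀ l : ℂ, ((if l ∈ s₂ then p₂ l else 0).eval (t:ℂ)) * Complex.exp (l * t)
        = if l ∈ s₂ then (p₂ l).eval (t:ℂ) * Complex.exp (l * t) else 0 := by
      intro l; split_ifs <;> simp
    rw [Finset.sum_congr rfl fun l _ => this l, Finset.sum_ite_mem,
      Finset.union_inter_cancel_right]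

lemma mem_bohl_hasRep {f : ℝ → ℂ} (hf : f ∈ Bohl) : HasRep f := by
  set S : Set (ℝ → ℂ) :=
    {g : ℝ → ℂ | ∃ (k : ℕ) (l : ℂ), g = fun t : ℝ => (t : ℂ) ^ k * Complex.exp (l * t)} with hS
  have hone : (1 : ℝ → ℂ) ∈ S := by
    refine ⟨0, 0, ?_⟩
    funext t; simp
  have hmul : ∀ a ∈ S, ∀ b ∈ S, a * b ∈ S := by
    rintro a ⟨k, l, rfl⟩ b ⟨k', l', rfl⟩
    refine ⟨k + k', l + l', ?_⟩
    funext t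
    simp only [Pi.mul_apply]
    rw [pow_add, add_mul, Complex.exp_add]
    ring
  have hclos : (Submonoid.closure S : Set (ℝ → ℂ)) ⊆ S := by
    intro x hx
    exact Submonoid.closure_le (S := ⟨⟨S, fun {a b} ha hb => hmul a ha b hb⟩, hone⟩)
      |>.mpr le_rfl hx
  have hspan : f ∈ Submodule.span ℂ S := by
    have h1 : f ∈ Submodule.span ℂ (Submonoid.closure S : Set (ℝ → ℂ)) := by
      rw [← Algebra.adjoin_eq_span]
      exact hf
    exact Submodule.span_mono hclos h1
  clear hf
  induction hspan using Submodule.span_induction with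
  | mem x hx =>
    obtain ⟨k, l, rfl⟩ := hx
    refine ⟨{l}, fun _ => X ^ k, fun t => ?_⟩
    simp [E]
  | zero => exact ⟨∅, fun _ => 0, fun t => by simp [E]⟩
  | add x y hx hy ihx ihy =>
    obtain ⟨s₁, p₁, h1⟩ := ihx
    obtain ⟨s₂, p₂, h2⟩ := ihy
    refine ⟨s₁ ∪ s₂,
      fun l => (if l ∈ s₁ then p₁ l else 0) + (if l ∈ s₂ then p₂ l else 0), fun t => ?_⟩
    rw [Pi.add_apply, h1 t, h2 t, ← E_union]
  | smul c x hx ihx =>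
    obtain ⟨s₁, p₁, h1⟩ := ihx
    refine ⟨s₁, fun l => C c * p₁ l, fun t => ?_⟩
    simp only [Pi.smul_apply, smul_eq_mul, h1 t, E, eval_mul, eval_C, Finset.mul_sum, mul_assoc]

open Pointwise in
lemma E_mul (s₁ s₂ : Finset ℂ) (p₁ p₂ : ℂ → Polynomial ℂ) (t : ℝ) :
    E s₁ p₁ t * E s₂ p₂ t
      = E (s₁ + s₂)
          (fun n => ∑ l ∈ s₁, ∑ m ∈ s₂, if l + m = n then p₁ l * p₂ m else 0) t := by
  have key : ∀ n : ℂ,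
      (∑ l ∈ s₁, ∑ m ∈ s₂, if l + m = n then p₁ l * p₂ m else 0).eval (t:ℂ)
        * Complex.exp (n * t)
      = ∑ l ∈ s₁, ∑ m ∈ s₂, if l + m = n then
          (p₁ l).eval (t:ℂ) * (p₂ m).eval (t:ℂ) * Complex.exp (n * t) else 0 := by
    intro n
    rw [eval_finset_sum, Finset.sum_mul]
    refine Finset.sum_congr rfl fun l _ => ?_
    rw [eval_finset_sum, Finset.sum_mul]
    refine Finset.sum_congr rfl fun m _ => ?_
    split_ifs <;> simp [eval_mul]
  calc E s₁ p₁ t * E s₂ p₂ t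
      = ∑ l ∈ s₁, ∑ m ∈ s₂,
          (p₁ l).eval (t:ℂ) * (p₂ m).eval (t:ℂ) * Complex.exp ((l + m) * t) := by
        rw [E, E, Finset.sum_mul_sum]
        refine Finset.sum_congr rfl fun l _ => Finset.sum_congr rfl fun m _ => ?_
        rw [add_mul, Complex.exp_add]; ring
    _ = ∑ l ∈ s₁, ∑ m ∈ s₂, ∑ n ∈ s₁ + s₂, if l + m = n then
          (p₁ l).eval (t:ℂ) * (p₂ m).eval (t:ℂ) * Complex.exp (n * t) else 0 := by
        refine Finset.sum_congr rfl fun l hl => Finset.sum_congr rfl fun m hm => ?_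
        rw [Finset.sum_ite_eq (s₁ + s₂) (l + m), if_pos (Finset.add_mem_add hl hm)]
    _ = ∑ n ∈ s₁ + s₂, ∑ l ∈ s₁, ∑ m ∈ s₂, if l + m = n then
          (p₁ l).eval (t:ℂ) * (p₂ m).eval (t:ℂ) * Complex.exp (n * t) else 0 := by
        rw [Finset.sum_congr rfl fun l (_ : l ∈ s₁) => Finset.sum_comm, Finset.sum_comm]
    _ = E (s₁ + s₂)
          (fun n => ∑ l ∈ s₁, ∑ m ∈ s₂, if l + m = n then p₁ l * p₂ m else 0) t := by
        rw [E]
        exact Finset.sum_congr rfl fun n _ => (key n).symm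

lemma exists_inj_functional (D : Finset ℂ) :
    ∃ c : ℝ, ∀ a ∈ D, ∀ b ∈ D, a.re + c * a.im = b.re + c * b.im → a = b := by
  obtain ⟨c, hc⟩ := Infinite.exists_notMem_finset
    ((D ×ˢ D).image fun ab : ℂ × ℂ => (ab.2.re - ab.1.re) / (ab.1.im - ab.2.im))
  refine ⟨c, fun a ha b hb hab => ?_⟩
  by_cases him : a.im = b.im
  · have hre : a.re = b.re := by rw [him] at hab; linarith
    exact Complex.ext hre him
  · exfalso
    apply hc
    refine Finset.mem_image.mpr ⟨(a, b), Finset.mem_product.mpr ⟨ha, hb⟩, ?_⟩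
    rw [div_eq_iff (sub_ne_zero.mpr him)]
    linarith

end BohlAux

open BohlAux Polynomial Pointwise in
/-- The invertible elements of the Bohl algebra are exactly the functions
`t ↦ c e^{λ t}` with `c ≠ 0`. -/
theorem bohl_units (f : ℝ → ℂ) (hf : f ∈ Bohl) :
    (∃ g : ℝ → ℂ, g ∈ Bohl ∧ f * g = 1) ↔
      ∃ (c l : ℂ), c ≠ 0 ∧ f = fun t : ℝ => c * Complex.exp (l * t) := by
  classical
  constructor
  · rintro ⟨g, hg, hfg⟩
    have hm : ∀ t : ℝ, f t * g t = 1 := fun t => congrFun hfg t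
    obtain ⟨s, p, hfr⟩ := mem_bohl_hasRep hf
    obtain ⟨s', q, hgr⟩ := mem_bohl_hasRep hg
    -- restrict to nonzero coefficients
    set s₁ : Finset ℂ := s.filter (fun l => p l ≠ 0) with hs₁
    set s₂ : Finset ℂ := s'.filter (fun l => q l ≠ 0) with hs₂
    have hf1 : ∀ t : ℝ, f t = E s₁ p t := by
      intro t
      rw [hfr t, E, E, Finset.sum_filter_of_ne]
      intro x hx hne
      intro h0
      rw [h0] at hne
      simp at hne
    have hg1 : ∀ t : ℝ, g t = E s₂ q t := by
      intro t
      rw [hgr t, E, E, Finset.sum_filter_of_ne]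
      intro x hx hne h0
      rw [h0] at hne
      simp at hne
    have hp1 : ∀ l ∈ s₁, p l ≠ 0 := fun l hl => (Finset.mem_filter.mp hl).2
    have hq1 : ∀ l ∈ s₂, q l ≠ 0 := fun l hl => (Finset.mem_filter.mp hl).2
    have hne₁ : s₁.Nonempty := by
      rw [Finset.nonempty_iff_ne_empty]
      intro hemp
      have := hm 0
      rw [hf1 0, hemp] at this
      simp [E] at this
    have hne₂ : s₂.Nonempty := by
      rw [Finset.nonempty_iff_ne_empty]
      intro hemp
      have := hm 0
      rw [hg1 0, hemp] at this
      simp [E] at this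
    set N : Finset ℂ := s₁ + s₂ with hN
    set r : ℂ → Polynomial ℂ :=
      fun n => ∑ l ∈ s₁, ∑ m ∈ s₂, if l + m = n then p l * q m else 0 with hr
    have hprod : ∀ t : ℝ, E N r t = 1 := by
      intro t
      rw [← E_mul, ← hf1 t, ← hg1 t]
      exact hm t
    -- uniqueness: r n = δ_{n,0}
    have huniq : ∀ n ∈ N, r n = if n = 0 then 1 else 0 := by
      set N' : Finset ℂ := insert 0 N with hN'
      set r₂ : ℂ → Polynomial ℂ :=
        fun n => (if n ∈ N then r n else 0) - (if n = 0 then 1 else 0) with hr₂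
      have hzero : ∀ t : ℝ, E N' r₂ t = 0 := by
        intro t
        have e1 : E N' r₂ t
            = (∑ n ∈ N', if n ∈ N then (r n).eval (t:ℂ) * Complex.exp (n * t) else 0)
              - (∑ n ∈ N', if n = 0 then (1:ℂ) * Complex.exp (n * t) else 0) := by
          rw [E, ← Finset.sum_sub_distrib]
          refine Finset.sum_congr rfl fun n _ => ?_
          simp only [hr₂, eval_sub, sub_mul]
          congr 1 <;> split_ifs <;> simp
        have hA : (∑ n ∈ N', if n ∈ N then (r n).eval (t:ℂ) * Complex.exp (n * t) else 0)
            = E N r t := by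
          rw [Finset.sum_ite_mem, E,
            Finset.inter_eq_right.mpr (Finset.subset_insert (0:ℂ) N)]
        have hB : (∑ n ∈ N', if n = 0 then (1:ℂ) * Complex.exp (n * t) else 0) = 1 := by
          rw [Finset.sum_ite_eq' N' (0:ℂ) (fun n => (1:ℂ) * Complex.exp (n * t)),
            if_pos (Finset.mem_insert_self (0:ℂ) N)]
          simp
        rw [e1, hA, hB, hprod t, sub_self]
      have hind := indep N' r₂ hzero
      intro n hn
      have h2 := hind n (Finset.mem_insert_of_mem hn)
      rw [hr₂] at h2
      simp only [if_pos hn] at h2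
      exact sub_eq_zero.mp h2
    -- choose a generic linear functional
    obtain ⟨c, hinj⟩ := exists_inj_functional (s₁ ∪ s₂)
    set φ : ℂ → ℝ := fun z => z.re + c * z.im with hφ
    have φadd : ∀ a b : ℂ, φ (a + b) = φ a + φ b := by
      intro a b; simp [hφ]; ring
    have φinj : ∀ a ∈ s₁ ∪ s₂, ∀ b ∈ s₁ ∪ s₂, φ a = φ b → a = b := hinj
    obtain ⟨l₀, hl₀, hl₀max⟩ := Finset.exists_max_image s₁ φ hne₁
    obtain ⟨m₀, hm₀, hm₀max⟩ := Finset.exists_max_image s₂ φ hne₂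
    obtain ⟨l₁, hl₁, hl₁min⟩ := Finset.exists_min_image s₁ φ hne₁
    obtain ⟨m₁, hm₁, hm₁min⟩ := Finset.exists_min_image s₂ φ hne₂
    have hkey : ∀ l' ∈ s₁, ∀ m' ∈ s₂,
        (∀ l ∈ s₁, ∀ m ∈ s₂, l + m = l' + m' → l = l' ∧ m = m') →
        r (l' + m') = p l' * q m' := by
      intro l' hl' m' hm' hext
      have hre : r (l' + m')
          = ∑ l ∈ s₁, ∑ m ∈ s₂, if l + m = l' + m' then p l * q m else 0 := rfl
      rw [hre]
      rw [Finset.sum_eq_single_of_mem l' hl' (fun l hl hne =>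
        Finset.sum_eq_zero fun m hm => if_neg fun h => hne ((hext l hl m hm h).1))]
      rw [Finset.sum_eq_single_of_mem m' hm' (fun m hm hne =>
        if_neg fun h => hne ((hext l' hl' m hm h).2))]
      rw [if_pos rfl]
    have hmaxext : ∀ l ∈ s₁, ∀ m ∈ s₂, l + m = l₀ + m₀ → l = l₀ ∧ m = m₀ := by
      intro l hl m hm h
      have h1 : φ l + φ m = φ l₀ + φ m₀ := by
        rw [← φadd, ← φadd, h]
      have h2 : φ l = φ l₀ := le_antisymm (hl₀max l hl)
        (by have := hm₀max m hm; linarith)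
      have h3 : φ m = φ m₀ := by linarith
      exact ⟨φinj l (Finset.mem_union_left _ hl) l₀ (Finset.mem_union_left _ hl₀) h2,
        φinj m (Finset.mem_union_right _ hm) m₀ (Finset.mem_union_right _ hm₀) h3⟩
    have hminext : ∀ l ∈ s₁, ∀ m ∈ s₂, l + m = l₁ + m₁ → l = l₁ ∧ m = m₁ := by
      intro l hl m hm h
      have h1 : φ l + φ m = φ l₁ + φ m₁ := by
        rw [← φadd, ← φadd, h]
      have h2 : φ l = φ l₁ := le_antisymm
        (by have := hm₁min m hm; linarith) (hl₁min l hl)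
      have h3 : φ m = φ m₁ := by linarith
      exact ⟨φinj l (Finset.mem_union_left _ hl) l₁ (Finset.mem_union_left _ hl₁) h2,
        φinj m (Finset.mem_union_right _ hm) m₁ (Finset.mem_union_right _ hm₁) h3⟩
    have hrmax : r (l₀ + m₀) = p l₀ * q m₀ := hkey l₀ hl₀ m₀ hm₀ hmaxext
    have hrmin : r (l₁ + m₁) = p l₁ * q m₁ := hkey l₁ hl₁ m₁ hm₁ hminext
    have hmax0 : l₀ + m₀ = 0 ∧ p l₀ * q m₀ = 1 := by
      have hmem : l₀ + m₀ ∈ N := Finset.add_mem_add hl₀ hm₀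
      have := huniq _ hmem
      rw [hrmax] at this
      by_cases h0 : l₀ + m₀ = 0
      · rw [if_pos h0] at this; exact ⟨h0, this⟩
      · rw [if_neg h0] at this
        exact absurd this (mul_ne_zero (hp1 _ hl₀) (hq1 _ hm₀))
    have hmin0 : l₁ + m₁ = 0 := by
      have hmem : l₁ + m₁ ∈ N := Finset.add_mem_add hl₁ hm₁
      have := huniq _ hmem
      rw [hrmin] at this
      by_cases h0 : l₁ + m₁ = 0
      · exact h0
      · rw [if_neg h0] at this
        exact absurd this (mul_ne_zero (hp1 _ hl₁) (hq1 _ hm₁))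
    -- all exponents in s₁ coincide with l₀
    have hφeq : φ l₁ = φ l₀ := by
      have e0 : φ (l₀ + m₀) = 0 := by rw [hmax0.1]; simp [hφ]
      have e1 : φ (l₁ + m₁) = 0 := by rw [hmin0]; simp [hφ]
      rw [φadd] at e0 e1
      have := hl₁min l₀ hl₀
      have := hm₁min m₀ hm₀
      linarith
    have hs₁sing : s₁ = {l₀} := by
      apply Finset.eq_singleton_iff_unique_mem.mpr
      refine ⟨hl₀, fun l hl => ?_⟩
      have h1 := hl₀max l hl
      have h2 := hl₁min l hl
      exact φinj l (Finset.mem_union_left _ hl) l₀ (Finset.mem_union_left _ hl₀)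
        (by linarith)
    -- conclude
    have hfval : ∀ t : ℝ, f t = (p l₀).eval (t:ℂ) * Complex.exp (l₀ * t) := by
      intro t
      rw [hf1 t, hs₁sing, E, Finset.sum_singleton]
    have hunit : IsUnit (p l₀) := IsUnit.of_mul_eq_one _ hmax0.2
    obtain ⟨cc, hcu, hcp⟩ := Polynomial.isUnit_iff.mp hunit
    refine ⟨cc, l₀, isUnit_iff_ne_zero.mp hcu, funext fun t => ?_⟩
    rw [hfval t, ← hcp, eval_C]
  · rintro ⟨c, l, hc, rfl⟩
    refine ⟨fun t : ℝ => c⁻¹ * Complex.exp ((-l) * t), ?_, ?_⟩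
    · have hgen : (fun t : ℝ => ((t:ℂ)) ^ 0 * Complex.exp ((-l) * t)) ∈ Bohl :=
        Algebra.subset_adjoin ⟨0, -l, rfl⟩
      have := Bohl.smul_mem hgen c⁻¹
      convert this using 1
      funext t
      simp [smul_eq_mul]
    · funext t
      simp only [Pi.mul_apply, Pi.one_apply]
      rw [mul_mul_mul_comm, ← Complex.exp_add]
      rw [mul_inv_cancel₀ hc]
      rw [show l * (t:ℂ) + (-l) * t = 0 by ring, Complex.exp_zero, mul_one]

end
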